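/- arXiv:2507.18805 — 2 statements merged into one kernel-verified Lean document; each statement's English description precedes it below -/
import Mathlib

section
/- Let E be closed, non-empty, |E| = 0, and Q₀ a cube intersecting E. Then lim_{t→1⁻} 𝓛_{Q₀}(t) = 0, lim_{t→0⁺} 𝓢_{Q₀}(t) = 0, lim_{t→0⁺} 𝓛_{Q₀}(t) = l(𝓜(Q₀)), and lim_{t→1⁻} 𝓢_{Q₀}(t) = l(𝓜(Q₀)). -/
open MeasureTheory Set
open scoped Classical

/-- A half-open axis-parallel cube in `ℝⁿ`. -/
structure Cube (n : ℕ) where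
  a : Fin n → ℝ
  l : ℝ
  l_pos : 0 < l

namespace Cube

/-- The set of points of the cube. -/
def carrier {n : ℕ} (Q : Cube n) : Set (Fin n → ℝ) :=
  {x | ∀ i, Q.a i ≤ x i ∧ x i < Q.a i + Q.l}

/-- The volume (Lebesgue measure) of the cube. -/
def vol {n : ℕ} (Q : Cube n) : ℝ := Q.l ^ n

end Cube

/-- `Q` is a dyadic subcube of `Q₀` of generation `j`. -/
def IsDyadic {n : ℕ} (Q₀ Q : Cube n) (j : ℕ) : Prop :=
  Q.l = Q₀.l / 2 ^ j ∧
    ∃ k : Fin n → ℕ, (∀ i, k i < 2 ^ j) ∧ ∀ i, Q.a i = Q₀.a i + (k i : ℝ) * Q₀.l / 2 ^ j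

/-- The dyadic system of subcubes of `Q₀`. -/
def dyadicFamily {n : ℕ} (Q₀ : Cube n) : Set (Cube n) := {Q | ∃ j, IsDyadic Q₀ Q j}

/-- `P` is the dyadic parent of `Q` inside the dyadic system of `Q₀`. -/
def IsParent {n : ℕ} (Q₀ P Q : Cube n) : Prop :=
  ∃ j : ℕ, IsDyadic Q₀ Q (j + 1) ∧ IsDyadic Q₀ P j ∧ Q.carrier ⊆ P.carrier

/-- The family `D_E(Q₀)` of maximal dyadic subcubes of `Q₀` avoiding `E` whose dyadic
parent meets `E`. -/
def DE {n : ℕ} (E : Set (Fin n → ℝ)) (Q₀ : Cube n) : Set (Cube n) :=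
  {Q | Q ∈ dyadicFamily Q₀ ∧ Q.carrier ∩ E = ∅ ∧
    ∀ P : Cube n, IsParent Q₀ P Q → (P.carrier ∩ E).Nonempty}

/-- `Σ_{Q ∈ D_E(Q₀), l(Q) ≥ L} |Q|`. -/
noncomputable def sumGE {n : ℕ} (E : Set (Fin n → ℝ)) (Q₀ : Cube n) (L : ℝ) : ℝ :=
  ∑' Q : {Q : Cube n // Q ∈ DE E Q₀ ∧ L ≤ Q.l}, (Q : Cube n).vol

/-- `Σ_{Q ∈ D_E(Q₀), l(Q) ≤ L} |Q|`. -/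
noncomputable def sumLE {n : ℕ} (E : Set (Fin n → ℝ)) (Q₀ : Cube n) (L : ℝ) : ℝ :=
  ∑' Q : {Q : Cube n // Q ∈ DE E Q₀ ∧ Q.l ≤ L}, (Q : Cube n).vol

/-- `Σ_{Q ∈ D_E(Q₀), l(Q) < L} |Q|`. -/
noncomputable def sumLT {n : ℕ} (E : Set (Fin n → ℝ)) (Q₀ : Cube n) (L : ℝ) : ℝ :=
  ∑' Q : {Q : Cube n // Q ∈ DE E Q₀ ∧ Q.l < L}, (Q : Cube n).vol

/-- `Σ_{Q ∈ D_E(Q₀), l(Q) > L} |Q|`. -/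
noncomputable def sumGT {n : ℕ} (E : Set (Fin n → ℝ)) (Q₀ : Cube n) (L : ℝ) : ℝ :=
  ∑' Q : {Q : Cube n // Q ∈ DE E Q₀ ∧ L < Q.l}, (Q : Cube n).vol

/-- The set `𝓛(t,Q₀,E)`. -/
def Lset {n : ℕ} (t : ℝ) (Q₀ : Cube n) (E : Set (Fin n → ℝ)) : Set ℝ :=
  {L | 0 ≤ L ∧ t * Q₀.vol ≤ sumGE E Q₀ L}

/-- The set `𝓢(t,Q₀,E)`. -/
def Sset {n : ℕ} (t : ℝ) (Q₀ : Cube n) (E : Set (Fin n → ℝ)) : Set ℝ :=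
  {L | 0 ≤ L ∧ t * Q₀.vol ≤ sumLE E Q₀ L}

/-- `𝓛_{Q₀}(t) = sup 𝓛(t,Q₀,E)` (the max, when attained). -/
noncomputable def Lfun {n : ℕ} (E : Set (Fin n → ℝ)) (Q₀ : Cube n) (t : ℝ) : ℝ :=
  sSup (Lset t Q₀ E)

/-- `𝓢_{Q₀}(t) = inf 𝓢(t,Q₀,E)` (the min, when attained). -/
noncomputable def Sfun {n : ℕ} (E : Set (Fin n → ℝ)) (Q₀ : Cube n) (t : ℝ) : ℝ :=
  sInf (Sset t Q₀ E)

/-- The Muckenhoupt class `A_p` (for `p = 1` the `A₁` condition, for `p > 1` the usual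
`A_p` condition), with cubes as the testing family. -/
def IsAp {n : ℕ} (p : ℝ) (w : (Fin n → ℝ) → ℝ) : Prop :=
  (∀ᵐ x, 0 < w x) ∧ LocallyIntegrable w volume ∧
    ∃ C : ℝ, 0 < C ∧ ∀ Q : Cube n,
      if p = 1 then
        (∫ x in Q.carrier, w x) / Q.vol ≤ C * essInf w (volume.restrict Q.carrier)
      else
        ((∫ x in Q.carrier, w x) / Q.vol) *
          ((∫ x in Q.carrier, w x ^ (-1 / (p - 1))) / Q.vol) ^ (p - 1) ≤ C


/-! ### Auxiliary lemmas -/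

section Aux

variable {n : ℕ}

namespace Cube

lemma ext' {Q Q' : Cube n} (ha : Q.a = Q'.a) (hl : Q.l = Q'.l) : Q = Q' := by
  cases Q; cases Q'; simp_all

lemma vol_pos (Q : Cube n) : 0 < Q.vol := pow_pos Q.l_pos n

lemma a_mem_carrier (Q : Cube n) : Q.a ∈ Q.carrier :=
  fun i => ⟨le_rfl, by linarith [Q.l_pos]⟩

lemma carrier_eq_pi (Q : Cube n) :
    Q.carrier = Set.pi Set.univ (fun i => Set.Ico (Q.a i) (Q.a i + Q.l)) := by
  ext x; simp [carrier, Set.mem_pi, Set.mem_Ico]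

lemma measurable_carrier (Q : Cube n) : MeasurableSet Q.carrier := by
  rw [carrier_eq_pi]; exact MeasurableSet.univ_pi fun i => measurableSet_Ico

lemma volume_carrier (Q : Cube n) : volume Q.carrier = ENNReal.ofReal Q.vol := by
  rw [carrier_eq_pi, volume_pi_pi]
  simp only [Real.volume_Ico, add_sub_cancel_left]
  rw [Finset.prod_const, Finset.card_univ, Fintype.card_fin,
    ← ENNReal.ofReal_pow Q.l_pos.le]
  rfl

end Cube

lemma isDyadic_self (Q₀ : Cube n) : IsDyadic Q₀ Q₀ 0 :=
  ⟨by simp, fun _ => 0, fun i => by simp, fun i => by simp⟩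

lemma IsDyadic.gen_unique {Q₀ Q : Cube n} {j j' : ℕ} (h : IsDyadic Q₀ Q j)
    (h' : IsDyadic Q₀ Q j') : j = j' := by
  have hl := h.1.symm.trans h'.1
  have hL := Q₀.l_pos
  have h2 : ((2:ℕ):ℝ) ^ j = ((2:ℕ):ℝ) ^ j' := by
    rw [div_eq_div_iff (by positivity) (by positivity)] at hl
    push_cast
    exact (mul_left_cancel₀ hL.ne' hl).symm
  have h3 : 2 ^ j = 2 ^ j' := by exact_mod_cast h2
  exact Nat.pow_right_injective le_rfl h3

lemma key_arith {L : ℝ} (hL : 0 < L) (j m : ℕ) (u v : ℕ)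
    (h : (u:ℝ) * L / 2 ^ j < (v:ℝ) * L / 2 ^ (j + m)) : u * 2 ^ m < v := by
  have h2 : (0:ℝ) < 2 ^ j := by positivity
  have h3 : (0:ℝ) < 2 ^ m := by positivity
  rw [pow_add, div_lt_div_iff₀ h2 (by positivity)] at h
  have hpos : (0:ℝ) < L * 2 ^ j := by positivity
  rw [show (u:ℝ) * L * (2 ^ j * 2 ^ m) = (↑u * 2 ^ m) * (L * 2 ^ j) by ring,
      show (v:ℝ) * L * 2 ^ j = ↑v * (L * 2 ^ j) by ring] at h
  have hr : (u:ℝ) * 2 ^ m < v := (mul_lt_mul_iff_of_pos_right hpos).mp h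
  have : ((u * 2 ^ m : ℕ) : ℝ) < (v : ℝ) := by push_cast; exact hr
  exact_mod_cast this

lemma key_arith2 {L : ℝ} (hL : 0 < L) (j m : ℕ) (u v : ℕ)
    (h : (u:ℝ) * L / 2 ^ (j + m) < (v:ℝ) * L / 2 ^ j) : u < v * 2 ^ m := by
  have h2 : (0:ℝ) < 2 ^ j := by positivity
  have h3 : (0:ℝ) < 2 ^ m := by positivity
  rw [pow_add, div_lt_div_iff₀ (by positivity) h2] at h
  have hpos : (0:ℝ) < L * 2 ^ j := by positivity
  rw [show (u:ℝ) * L * 2 ^ j = ↑u * (L * 2 ^ j) by ring,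
      show (v:ℝ) * L * (2 ^ j * 2 ^ m) = (↑v * 2 ^ m) * (L * 2 ^ j) by ring] at h
  have hr : (u:ℝ) < v * 2 ^ m := (mul_lt_mul_iff_of_pos_right hpos).mp h
  have : (u : ℝ) < ((v * 2 ^ m : ℕ) : ℝ) := by push_cast; exact hr
  exact_mod_cast this

/-- Dyadic nesting: a finer dyadic cube meeting a coarser one is contained in it. -/
lemma dyadic_subset {Q₀ Q Q' : Cube n} {j j' : ℕ} (hj : j ≤ j')
    (hQ : IsDyadic Q₀ Q j) (hQ' : IsDyadic Q₀ Q' j')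
    (hx : (Q.carrier ∩ Q'.carrier).Nonempty) : Q'.carrier ⊆ Q.carrier := by
  obtain ⟨x, hxQ, hxQ'⟩ := hx
  obtain ⟨hl, k, hk, ha⟩ := hQ
  obtain ⟨hl', k', hk', ha'⟩ := hQ'
  obtain ⟨m, rfl⟩ : ∃ m, j' = j + m := ⟨j' - j, (Nat.add_sub_cancel' hj).symm⟩
  have hL := Q₀.l_pos
  intro y hy i
  have hxQi := hxQ i
  have hxQ'i := hxQ' i
  have hyi := hy i
  rw [ha i, hl] at hxQi
  rw [ha' i, hl'] at hxQ'i
  rw [ha' i, hl'] at hyi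
  rw [ha i, hl]
  -- integer inequalities
  have h1 : k i * 2 ^ m < k' i + 1 := by
    apply key_arith hL
    have e : ((k' i : ℝ) + 1) * Q₀.l / 2 ^ (j + m)
        = (k' i : ℝ) * Q₀.l / 2 ^ (j + m) + Q₀.l / 2 ^ (j + m) := by ring
    push_cast
    rw [e]
    linarith [hxQi.1, hxQ'i.2]
  have h2 : k' i < (k i + 1) * 2 ^ m := by
    apply key_arith2 hL
    have e : ((k i : ℝ) + 1) * Q₀.l / 2 ^ j
        = (k i : ℝ) * Q₀.l / 2 ^ j + Q₀.l / 2 ^ j := by ring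
    push_cast
    rw [e]
    linarith [hxQ'i.1, hxQi.2]
  have hA : ((k i : ℝ)) * 2 ^ m ≤ k' i := by
    have := Nat.lt_succ_iff.mp h1
    exact_mod_cast this
  have hB : (k' i : ℝ) + 1 ≤ ((k i : ℝ) + 1) * 2 ^ m := by
    have := Nat.succ_le_of_lt h2
    exact_mod_cast this
  have hp : (0:ℝ) < 2 ^ (j + m) := by positivity
  have e1 : (k i : ℝ) * Q₀.l / 2 ^ j = ((k i : ℝ) * 2 ^ m) * Q₀.l / 2 ^ (j + m) := by
    rw [pow_add]; field_simp
  have e2 : ((k i : ℝ) + 1) * Q₀.l / 2 ^ j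
      = (((k i : ℝ) + 1) * 2 ^ m) * Q₀.l / 2 ^ (j + m) := by
    rw [pow_add]; field_simp
  have p1 : (k i : ℝ) * Q₀.l / 2 ^ j ≤ (k' i : ℝ) * Q₀.l / 2 ^ (j + m) := by
    rw [e1]; gcongr
  have p2 : ((k' i : ℝ) + 1) * Q₀.l / 2 ^ (j + m) ≤ ((k i : ℝ) + 1) * Q₀.l / 2 ^ j := by
    rw [e2]; gcongr
  constructor
  · linarith [hyi.1]
  · have q : ((k' i : ℝ) + 1) * Q₀.l / 2 ^ (j + m)
        = (k' i : ℝ) * Q₀.l / 2 ^ (j + m) + Q₀.l / 2 ^ (j + m) := by ring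
    have q2 : ((k i : ℝ) + 1) * Q₀.l / 2 ^ j
        = (k i : ℝ) * Q₀.l / 2 ^ j + Q₀.l / 2 ^ j := by ring
    linarith [hyi.2]

/-- The generation-`j` dyadic subcube of `Q₀` containing `x`. -/
noncomputable def dyadicAt (Q₀ : Cube n) (j : ℕ) (x : Fin n → ℝ) : Cube n :=
  ⟨fun i => Q₀.a i + (⌊(x i - Q₀.a i) * 2 ^ j / Q₀.l⌋₊ : ℝ) * Q₀.l / 2 ^ j,
    Q₀.l / 2 ^ j, div_pos Q₀.l_pos (by positivity)⟩

lemma dyadicAt_spec {Q₀ : Cube n} {x : Fin n → ℝ} (hx : x ∈ Q₀.carrier) (j : ℕ) :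
    IsDyadic Q₀ (dyadicAt Q₀ j x) j ∧ x ∈ (dyadicAt Q₀ j x).carrier := by
  have hL := Q₀.l_pos
  have h2 : (0:ℝ) < 2 ^ j := by positivity
  have hnn : ∀ i, 0 ≤ (x i - Q₀.a i) * 2 ^ j / Q₀.l := fun i =>
    div_nonneg (mul_nonneg (by linarith [(hx i).1]) (by positivity)) hL.le
  refine ⟨⟨rfl, fun i => ⌊(x i - Q₀.a i) * 2 ^ j / Q₀.l⌋₊, fun i => ?_, fun i => rfl⟩,
    fun i => ?_⟩
  · rw [Nat.floor_lt (hnn i)]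
    push_cast
    rw [div_lt_iff₀ hL]
    have := (hx i).2
    nlinarith
  · set K := ⌊(x i - Q₀.a i) * 2 ^ j / Q₀.l⌋₊ with hK
    have h1 : (K : ℝ) * Q₀.l ≤ (x i - Q₀.a i) * 2 ^ j := by
      have := Nat.floor_le (hnn i)
      rw [le_div_iff₀ hL] at this
      exact this
    have h3 : (x i - Q₀.a i) * 2 ^ j < ((K : ℝ) + 1) * Q₀.l := by
      have := Nat.lt_floor_add_one ((x i - Q₀.a i) * 2 ^ j / Q₀.l)
      rw [div_lt_iff₀ hL] at this
      exact this
    have hb1 : (K : ℝ) * Q₀.l / 2 ^ j ≤ x i - Q₀.a i := by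
      rw [div_le_iff₀ h2]; exact h1
    have hb2 : x i - Q₀.a i < ((K : ℝ) + 1) * Q₀.l / 2 ^ j := by
      rw [lt_div_iff₀ h2]; exact h3
    have e : ((K : ℝ) + 1) * Q₀.l / 2 ^ j = (K : ℝ) * Q₀.l / 2 ^ j + Q₀.l / 2 ^ j := by
      ring
    constructor
    · show Q₀.a i + (K : ℝ) * Q₀.l / 2 ^ j ≤ x i
      linarith
    · show x i < Q₀.a i + (K : ℝ) * Q₀.l / 2 ^ j + Q₀.l / 2 ^ j
      linarith

lemma dyadic_eq_dyadicAt {Q₀ Q : Cube n} {j : ℕ} (hQ : IsDyadic Q₀ Q j)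
    {x : Fin n → ℝ} (hxQ : x ∈ Q.carrier) (hx : x ∈ Q₀.carrier) :
    Q = dyadicAt Q₀ j x := by
  obtain ⟨hl, k, hk, ha⟩ := hQ
  have hL := Q₀.l_pos
  have h2 : (0:ℝ) < 2 ^ j := by positivity
  refine Cube.ext' (funext fun i => ?_) hl
  have hx1 : Q₀.a i + (k i : ℝ) * Q₀.l / 2 ^ j ≤ x i := by
    rw [← ha i]; exact (hxQ i).1
  have hx2 : x i < Q₀.a i + (k i : ℝ) * Q₀.l / 2 ^ j + Q₀.l / 2 ^ j := by
    rw [← ha i, ← hl]; exact (hxQ i).2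
  have hfl : ⌊(x i - Q₀.a i) * 2 ^ j / Q₀.l⌋₊ = k i := by
    have hnn : 0 ≤ (x i - Q₀.a i) * 2 ^ j / Q₀.l := by
      have h0 : 0 ≤ (k i : ℝ) * Q₀.l / 2 ^ j := by positivity
      exact div_nonneg (mul_nonneg (by linarith) (by positivity)) hL.le
    rw [Nat.floor_eq_iff hnn]
    constructor
    · rw [le_div_iff₀ hL]
      have : (k i : ℝ) * Q₀.l / 2 ^ j ≤ x i - Q₀.a i := by linarith
      rw [div_le_iff₀ h2] at this
      exact this
    · rw [div_lt_iff₀ hL]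
      have e : ((k i : ℝ) + 1) * Q₀.l / 2 ^ j
          = (k i : ℝ) * Q₀.l / 2 ^ j + Q₀.l / 2 ^ j := by ring
      have : x i - Q₀.a i < ((k i : ℝ) + 1) * Q₀.l / 2 ^ j := by linarith
      rw [lt_div_iff₀ h2] at this
      exact this
  show Q.a i = Q₀.a i + (⌊(x i - Q₀.a i) * 2 ^ j / Q₀.l⌋₊ : ℝ) * Q₀.l / 2 ^ j
  rw [ha i, hfl]

lemma dyadic_a_mem {Q₀ Q : Cube n} {j : ℕ} (hQ : IsDyadic Q₀ Q j) :
    Q.a ∈ Q₀.carrier := by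
  obtain ⟨hl, k, hk, ha⟩ := hQ
  have hL := Q₀.l_pos
  have h2 : (0:ℝ) < 2 ^ j := by positivity
  intro i
  rw [ha i]
  constructor
  · have : 0 ≤ (k i : ℝ) * Q₀.l / 2 ^ j := by positivity
    linarith
  · have hki : (k i : ℝ) < 2 ^ j := by exact_mod_cast hk i
    have : (k i : ℝ) * Q₀.l / 2 ^ j < Q₀.l := by
      rw [div_lt_iff₀ h2]
      nlinarith
    linarith

lemma dyadic_carrier_subset {Q₀ Q : Cube n} {j : ℕ} (hQ : IsDyadic Q₀ Q j) :
    Q.carrier ⊆ Q₀.carrier :=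
  dyadic_subset (Nat.zero_le j) (isDyadic_self Q₀) hQ
    ⟨Q.a, dyadic_a_mem hQ, Q.a_mem_carrier⟩

lemma isParent_dyadicAt {Q₀ Q : Cube n} {j : ℕ} (hQ : IsDyadic Q₀ Q (j + 1)) :
    IsParent Q₀ (dyadicAt Q₀ j Q.a) Q := by
  have haQ₀ : Q.a ∈ Q₀.carrier := dyadic_a_mem hQ
  obtain ⟨hdy, hmem⟩ := dyadicAt_spec haQ₀ j
  exact ⟨j, hQ, hdy, dyadic_subset (Nat.le_succ j) hdy hQ ⟨Q.a, hmem, Q.a_mem_carrier⟩⟩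

lemma parent_eq {Q₀ P Q : Cube n} {j : ℕ} (hQ : IsDyadic Q₀ Q (j + 1))
    (hP : IsParent Q₀ P Q) {x : Fin n → ℝ} (hxQ : x ∈ Q.carrier) :
    P = dyadicAt Q₀ j x := by
  obtain ⟨j', hQ', hP', hsub⟩ := hP
  have hj : j' = j := by
    have := hQ'.gen_unique hQ
    omega
  subst hj
  exact dyadic_eq_dyadicAt hP' (hsub hxQ) (dyadic_carrier_subset hQ hxQ)

/-- Every point of `Q₀ \ E` lies in some cube of `D_E(Q₀)`. -/
lemma exists_DE_mem {E : Set (Fin n → ℝ)} (hE : IsClosed E) {Q₀ : Cube n}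
    (hQ₀ : (Q₀.carrier ∩ E).Nonempty) {x : Fin n → ℝ}
    (hx : x ∈ Q₀.carrier) (hxE : x ∉ E) : ∃ Q ∈ DE E Q₀, x ∈ Q.carrier := by
  have hL := Q₀.l_pos
  -- a generation at which the dyadic cube of x avoids E
  have hS : ∃ j, (dyadicAt Q₀ j x).carrier ∩ E = ∅ := by
    obtain ⟨δ, hδ, hball⟩ := Metric.isOpen_iff.mp hE.isOpen_compl x hxE
    obtain ⟨j, hj⟩ := pow_unbounded_of_one_lt (Q₀.l / δ) (one_lt_two (α := ℝ))
    refine ⟨j, Set.eq_empty_iff_forall_notMem.mpr fun z ⟨hz, hzE⟩ => ?_⟩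
    have h2 : (0:ℝ) < 2 ^ j := by positivity
    have hsmall : Q₀.l / 2 ^ j < δ := by
      rw [div_lt_iff₀ h2]
      rw [div_lt_iff₀ hδ] at hj
      linarith
    have hmem := (dyadicAt_spec hx j).2
    have hdist : dist z x < δ := by
      have : ∀ i, dist (z i) (x i) ≤ Q₀.l / 2 ^ j := by
        intro i
        have h1 := hz i
        have h2' := hmem i
        have hls : (dyadicAt Q₀ j x).l = Q₀.l / 2 ^ j := rfl
        rw [Real.dist_eq, abs_le]
        constructor <;> [linarith [h1.1, h2'.2, hls]; linarith [h1.2, h2'.1, hls]]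
      calc dist z x ≤ Q₀.l / 2 ^ j := (dist_pi_le_iff (by positivity)).mpr this
        _ < δ := hsmall
    exact hball hdist hzE
  classical
  let j₀ := Nat.find hS
  have hspec : (dyadicAt Q₀ j₀ x).carrier ∩ E = ∅ := Nat.find_spec hS
  have hj₀ : j₀ ≠ 0 := by
    intro h0
    have : Q₀ = dyadicAt Q₀ 0 x := dyadic_eq_dyadicAt (isDyadic_self Q₀) hx hx
    rw [h0, ← this] at hspec
    exact hQ₀.ne_empty hspec
  obtain ⟨j', hj'⟩ : ∃ j', j₀ = j' + 1 := ⟨j₀ - 1, by omega⟩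
  refine ⟨dyadicAt Q₀ j₀ x, ⟨⟨j₀, (dyadicAt_spec hx j₀).1⟩, hspec, ?_⟩,
    (dyadicAt_spec hx j₀).2⟩
  intro P hP
  have hdyQ : IsDyadic Q₀ (dyadicAt Q₀ j₀ x) (j' + 1) := by
    rw [← hj']; exact (dyadicAt_spec hx j₀).1
  have hPeq : P = dyadicAt Q₀ j' x := parent_eq hdyQ hP (dyadicAt_spec hx j₀).2
  rw [hPeq, Set.nonempty_iff_ne_empty]
  exact Nat.find_min hS (by omega)

lemma DE_disjoint_aux {E : Set (Fin n → ℝ)} {Q₀ Q Q' : Cube n} {j j' : ℕ}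
    (hQ : Q ∈ DE E Q₀) (hQ' : Q' ∈ DE E Q₀) (hdQ : IsDyadic Q₀ Q j)
    (hdQ' : IsDyadic Q₀ Q' j') (hjj' : j ≤ j')
    (hmeet : (Q.carrier ∩ Q'.carrier).Nonempty) : Q = Q' := by
  obtain ⟨x, hxQ, hxQ'⟩ := hmeet
  have hsub : Q'.carrier ⊆ Q.carrier := dyadic_subset hjj' hdQ hdQ' ⟨x, hxQ, hxQ'⟩
  have hx₀ : x ∈ Q₀.carrier := dyadic_carrier_subset hdQ hxQ
  rcases eq_or_lt_of_le hjj' with rfl | hlt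
  · rw [dyadic_eq_dyadicAt hdQ hxQ hx₀, dyadic_eq_dyadicAt hdQ' hxQ' hx₀]
  · exfalso
    obtain ⟨j'', hj''⟩ : ∃ j'', j' = j'' + 1 := ⟨j' - 1, by omega⟩
    have hdQ'' : IsDyadic Q₀ Q' (j'' + 1) := hj'' ▸ hdQ'
    have hpar := isParent_dyadicAt hdQ''
    have hPE := hQ'.2.2 _ hpar
    -- the parent is contained in Q
    have hPsub : (dyadicAt Q₀ j'' Q'.a).carrier ⊆ Q.carrier := by
      apply dyadic_subset (by omega) hdQ (dyadicAt_spec (dyadic_a_mem hdQ'') j'').1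
      exact ⟨Q'.a, hsub Q'.a_mem_carrier, (dyadicAt_spec (dyadic_a_mem hdQ'') j'').2⟩
    obtain ⟨z, hz, hzE⟩ := hPE
    have : z ∈ Q.carrier ∩ E := ⟨hPsub hz, hzE⟩
    rw [hQ.2.1] at this
    exact this

lemma DE_pairwiseDisjoint {E : Set (Fin n → ℝ)} {Q₀ : Cube n} :
    (DE E Q₀).PairwiseDisjoint Cube.carrier := by
  intro Q hQ Q' hQ' hne
  obtain ⟨j, hdQ⟩ := hQ.1
  obtain ⟨j', hdQ'⟩ := hQ'.1
  rw [Function.onFun, Set.disjoint_iff_inter_eq_empty]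
  by_contra h
  rw [← Ne, ← Set.nonempty_iff_ne_empty] at h
  rcases le_total j j' with hle | hle
  · exact hne (DE_disjoint_aux hQ hQ' hdQ hdQ' hle h)
  · exact hne (DE_disjoint_aux hQ' hQ hdQ' hdQ hle ⟨h.choose, h.choose_spec.2, h.choose_spec.1⟩).symm

lemma DE_iUnion {E : Set (Fin n → ℝ)} (hE : IsClosed E) {Q₀ : Cube n}
    (hQ₀ : (Q₀.carrier ∩ E).Nonempty) :
    (⋃ Q ∈ DE E Q₀, Q.carrier) = Q₀.carrier \ E := by
  apply Set.Subset.antisymm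
  · intro x hx
    simp only [Set.mem_iUnion] at hx
    obtain ⟨Q, hQ, hxQ⟩ := hx
    obtain ⟨j, hdQ⟩ := hQ.1
    refine ⟨dyadic_carrier_subset hdQ hxQ, fun hxE => ?_⟩
    have : x ∈ Q.carrier ∩ E := ⟨hxQ, hxE⟩
    rw [hQ.2.1] at this
    exact this
  · rintro x ⟨hx, hxE⟩
    obtain ⟨Q, hQ, hxQ⟩ := exists_DE_mem hE hQ₀ hx hxE
    exact Set.mem_biUnion hQ hxQ

lemma DE_countable {E : Set (Fin n → ℝ)} {Q₀ : Cube n} : (DE E Q₀).Countable := by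
  have : dyadicFamily Q₀ ⊆ Set.range (fun p : ℕ × (Fin n → ℕ) =>
      (⟨fun i => Q₀.a i + (p.2 i : ℝ) * Q₀.l / 2 ^ p.1, Q₀.l / 2 ^ p.1,
        div_pos Q₀.l_pos (by positivity)⟩ : Cube n)) := by
    rintro Q ⟨j, hl, k, hk, ha⟩
    exact ⟨(j, k), (Cube.ext' (funext fun i => (ha i).symm) hl.symm)⟩
  exact (Set.countable_range _).mono (fun Q hQ => this hQ.1) |>.mono (fun _ h => h)

section Sums

variable {E : Set (Fin n → ℝ)} {Q₀ : Cube n}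

lemma biUnion_subset_carrier (p : Cube n → Prop) :
    (⋃ Q ∈ {Q : Cube n | Q ∈ DE E Q₀ ∧ p Q}, Q.carrier) ⊆ Q₀.carrier := by
  refine Set.iUnion₂_subset fun Q hQ => ?_
  obtain ⟨j, hd⟩ := hQ.1.1
  exact dyadic_carrier_subset hd

lemma biUnion_vol_ne_top (p : Cube n → Prop) :
    volume (⋃ Q ∈ {Q : Cube n | Q ∈ DE E Q₀ ∧ p Q}, Q.carrier) ≠ ⊤ :=
  ne_top_of_le_ne_top
    (by rw [Cube.volume_carrier]; exact ENNReal.ofReal_ne_top)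
    (measure_mono (biUnion_subset_carrier p))

lemma sum_eq (p : Cube n → Prop) :
    ∑' Q : {Q : Cube n // Q ∈ DE E Q₀ ∧ p Q}, (Q : Cube n).vol
      = (volume (⋃ Q ∈ {Q : Cube n | Q ∈ DE E Q₀ ∧ p Q}, Q.carrier)).toReal := by
  have hAc : ({Q : Cube n | Q ∈ DE E Q₀ ∧ p Q}).Countable :=
    DE_countable.mono (fun Q hQ => hQ.1)
  have hAd : ({Q : Cube n | Q ∈ DE E Q₀ ∧ p Q}).PairwiseDisjoint Cube.carrier :=
    DE_pairwiseDisjoint.subset (fun Q hQ => hQ.1)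
  rw [measure_biUnion hAc hAd (fun Q _ => Q.measurable_carrier),
    ENNReal.tsum_toReal_eq
      (fun Q => by rw [Cube.volume_carrier]; exact ENNReal.ofReal_ne_top)]
  exact tsum_congr fun Q => by
    rw [Cube.volume_carrier, ENNReal.toReal_ofReal (Q : Cube n).vol_pos.le]

lemma sum_total (hE : IsClosed E) (hQ₀ : (Q₀.carrier ∩ E).Nonempty)
    (hE0 : volume E = 0) {p : Cube n → Prop} (hall : ∀ Q ∈ DE E Q₀, p Q) :
    ∑' Q : {Q : Cube n // Q ∈ DE E Q₀ ∧ p Q}, (Q : Cube n).vol = Q₀.vol := by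
  rw [sum_eq]
  have hA : {Q : Cube n | Q ∈ DE E Q₀ ∧ p Q} = DE E Q₀ :=
    Set.ext fun Q => ⟨fun h => h.1, fun h => ⟨h, hall _ h⟩⟩
  rw [hA, DE_iUnion hE hQ₀, measure_diff_null hE0, Cube.volume_carrier,
    ENNReal.toReal_ofReal Q₀.vol_pos.le]

lemma sum_lower {p : Cube n → Prop} {Q' : Cube n} (hQ' : Q' ∈ DE E Q₀) (hp : p Q') :
    Q'.vol ≤ ∑' Q : {Q : Cube n // Q ∈ DE E Q₀ ∧ p Q}, (Q : Cube n).vol := by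
  rw [sum_eq]
  have hsub : Q'.carrier ⊆ ⋃ Q ∈ {Q : Cube n | Q ∈ DE E Q₀ ∧ p Q}, Q.carrier :=
    Set.subset_biUnion_of_mem (show Q' ∈ {Q : Cube n | Q ∈ DE E Q₀ ∧ p Q} from ⟨hQ', hp⟩)
  calc Q'.vol = (volume Q'.carrier).toReal := by
        rw [Cube.volume_carrier, ENNReal.toReal_ofReal Q'.vol_pos.le]
    _ ≤ _ := ENNReal.toReal_mono (biUnion_vol_ne_top p) (measure_mono hsub)

lemma sum_upper (hE : IsClosed E) (hQ₀ : (Q₀.carrier ∩ E).Nonempty)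
    (hE0 : volume E = 0) {p : Cube n → Prop} {Q' : Cube n}
    (hQ' : Q' ∈ DE E Q₀) (hp : ¬ p Q') :
    (∑' Q : {Q : Cube n // Q ∈ DE E Q₀ ∧ p Q}, (Q : Cube n).vol) + Q'.vol ≤ Q₀.vol := by
  rw [sum_eq]
  set U := ⋃ Q ∈ {Q : Cube n | Q ∈ DE E Q₀ ∧ p Q}, Q.carrier with hU
  have hdisj : Disjoint U Q'.carrier := by
    rw [Set.disjoint_left]
    intro a ha haQ'
    simp only [hU, Set.mem_iUnion] at ha
    obtain ⟨Q, hQ, haQ⟩ := ha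
    have hne : Q ≠ Q' := fun h => hp (h ▸ hQ.2)
    exact Set.disjoint_left.mp (DE_pairwiseDisjoint hQ.1 hQ' hne) haQ haQ'
  have hsub : U ∪ Q'.carrier ⊆ Q₀.carrier \ E := by
    rw [← DE_iUnion hE hQ₀]
    refine Set.union_subset ?_ (Set.subset_biUnion_of_mem hQ')
    refine Set.iUnion₂_subset fun Q hQ => Set.subset_biUnion_of_mem hQ.1
  have hvol : volume U + volume Q'.carrier ≤ ENNReal.ofReal Q₀.vol := by
    rw [← measure_union hdisj Q'.measurable_carrier]
    calc volume (U ∪ Q'.carrier) ≤ volume (Q₀.carrier \ E) := measure_mono hsub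
      _ = volume Q₀.carrier := measure_diff_null hE0
      _ = ENNReal.ofReal Q₀.vol := Q₀.volume_carrier
  have h1 : ((volume U) + volume Q'.carrier).toReal ≤ Q₀.vol := by
    calc ((volume U) + volume Q'.carrier).toReal
        ≤ (ENNReal.ofReal Q₀.vol).toReal :=
          ENNReal.toReal_mono ENNReal.ofReal_ne_top hvol
      _ = Q₀.vol := ENNReal.toReal_ofReal Q₀.vol_pos.le
  rw [ENNReal.toReal_add (biUnion_vol_ne_top p)
    (by rw [Cube.volume_carrier]; exact ENNReal.ofReal_ne_top)] at h1
  rw [Cube.volume_carrier, ENNReal.toReal_ofReal Q'.vol_pos.le] at h1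
  exact h1

lemma sum_empty_of {p : Cube n → Prop} (hnone : ∀ Q ∈ DE E Q₀, ¬ p Q) :
    ∑' Q : {Q : Cube n // Q ∈ DE E Q₀ ∧ p Q}, (Q : Cube n).vol = 0 := by
  haveI : IsEmpty {Q : Cube n // Q ∈ DE E Q₀ ∧ p Q} :=
    ⟨fun Q => hnone _ Q.2.1 Q.2.2⟩
  exact tsum_empty

lemma exists_small (hE : IsClosed E) (hQ₀ : (Q₀.carrier ∩ E).Nonempty)
    (hE0 : volume E = 0) {ε : ℝ} (hε : 0 < ε) : ∃ Q ∈ DE E Q₀, Q.l < ε := by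
  obtain ⟨e, he, heE⟩ := hQ₀
  obtain ⟨j, hj⟩ := pow_unbounded_of_one_lt (Q₀.l / ε) (one_lt_two (α := ℝ))
  have hL := Q₀.l_pos
  have h2 : (0:ℝ) < 2 ^ j := by positivity
  have hsmall : Q₀.l / 2 ^ j < ε := by
    rw [div_lt_iff₀ h2]
    rw [div_lt_iff₀ hε] at hj
    linarith
  have hspec := dyadicAt_spec he j
  have hpos : volume ((dyadicAt Q₀ j e).carrier \ E) ≠ 0 := by
    rw [measure_diff_null hE0, Cube.volume_carrier]
    simp only [Ne, ENNReal.ofReal_eq_zero, not_le]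
    exact (dyadicAt Q₀ j e).vol_pos
  obtain ⟨x, hxQj, hxE⟩ := nonempty_of_measure_ne_zero hpos
  have hx₀ : x ∈ Q₀.carrier := dyadic_carrier_subset hspec.1 hxQj
  obtain ⟨Q, hQ, hxQ⟩ := exists_DE_mem hE ⟨e, he, heE⟩ hx₀ hxE
  refine ⟨Q, hQ, ?_⟩
  obtain ⟨g, hg⟩ := hQ.1
  have hgj : j < g := by
    by_contra hgj
    push_neg at hgj
    have hsub := dyadic_subset hgj hg hspec.1 ⟨x, hxQ, hxQj⟩
    have : e ∈ Q.carrier ∩ E := ⟨hsub hspec.2, heE⟩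
    rw [hQ.2.1] at this
    exact this
  rw [hg.1]
  have hmono : Q₀.l / 2 ^ g ≤ Q₀.l / 2 ^ j := by
    apply div_le_div_of_nonneg_left hL.le h2
    exact pow_le_pow_right₀ (by norm_num) hgj.le
  linarith

end Sums

end Aux

/-- Limit behavior of `𝓛_{Q₀}` and `𝓢_{Q₀}` at the endpoints of `(0,1)`. -/
theorem stmt10 {n : ℕ} (E : Set (Fin n → ℝ)) (hE : IsClosed E) (hne : E.Nonempty)
    (hE0 : volume E = 0) (Q₀ : Cube n) (hQ₀ : (Q₀.carrier ∩ E).Nonempty)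
    (M : Cube n) (hM : M ∈ DE E Q₀) (hMmax : ∀ Q ∈ DE E Q₀, Q.l ≤ M.l) :
    Filter.Tendsto (Lfun E Q₀) (nhdsWithin 1 (Set.Iio 1)) (nhds 0) ∧
    Filter.Tendsto (Sfun E Q₀) (nhdsWithin 0 (Set.Ioi 0)) (nhds 0) ∧
    Filter.Tendsto (Lfun E Q₀) (nhdsWithin 0 (Set.Ioi 0)) (nhds M.l) ∧
    Filter.Tendsto (Sfun E Q₀) (nhdsWithin 1 (Set.Iio 1)) (nhds M.l) := by
  have hSpos : 0 < Q₀.vol := Q₀.vol_pos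
  have hMvol : 0 < M.vol := M.vol_pos
  -- basic sum facts
  have hGE0 : sumGE E Q₀ 0 = Q₀.vol :=
    sum_total hE hQ₀ hE0 (fun Q _ => Q.l_pos.le)
  have hLEMl : sumLE E Q₀ M.l = Q₀.vol :=
    sum_total hE hQ₀ hE0 hMmax
  have hGE_M : M.vol ≤ sumGE E Q₀ M.l := sum_lower hM le_rfl
  have hGE_gt : ∀ L, M.l < L → sumGE E Q₀ L = 0 := fun L hL =>
    sum_empty_of (fun Q hQ hle => absurd (hle.trans (hMmax Q hQ)) (not_le.mpr hL))
  have hGE_excl : ∀ L (Q' : Cube n), Q' ∈ DE E Q₀ → Q'.l < L →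
      sumGE E Q₀ L + Q'.vol ≤ Q₀.vol := fun L Q' hQ' hlt =>
    sum_upper hE hQ₀ hE0 hQ' (not_le.mpr hlt)
  have hLE_excl : ∀ L, L < M.l → sumLE E Q₀ L + M.vol ≤ Q₀.vol := fun L hL =>
    sum_upper hE hQ₀ hE0 hM (not_le.mpr hL)
  have hLE_low : ∀ Q' : Cube n, Q' ∈ DE E Q₀ → Q'.vol ≤ sumLE E Q₀ Q'.l :=
    fun Q' hQ' => sum_lower hQ' le_rfl
  refine ⟨?_, ?_, ?_, ?_⟩
  · -- Lfun → 0 as t → 1⁻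
    rw [Metric.tendsto_nhds]
    intro ε hε
    obtain ⟨Q', hQ', hQ'l⟩ := exists_small hE hQ₀ hE0 hε
    have hc1 : max ((Q₀.vol - Q'.vol) / Q₀.vol) 0 < 1 := by
      apply max_lt _ one_pos
      rw [div_lt_one hSpos]
      linarith [Q'.vol_pos]
    filter_upwards [Ioo_mem_nhdsLT_of_mem (⟨hc1, le_rfl⟩ :
      (1:ℝ) ∈ Set.Ioc (max ((Q₀.vol - Q'.vol) / Q₀.vol) 0) 1)] with t ht
    have ht1 : t < 1 := ht.2
    have htc : (Q₀.vol - Q'.vol) / Q₀.vol < t :=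
      lt_of_le_of_lt (le_max_left _ _) ht.1
    have hub : ∀ L ∈ Lset t Q₀ E, L ≤ Q'.l := by
      intro L hL
      by_contra hcon
      push_neg at hcon
      have h1 := hGE_excl L Q' hQ' hcon
      have h2 := hL.2
      have h3 : Q₀.vol - Q'.vol < t * Q₀.vol := by
        rw [div_lt_iff₀ hSpos] at htc
        linarith
      linarith
    have h0mem : (0:ℝ) ∈ Lset t Q₀ E := by
      refine ⟨le_rfl, ?_⟩
      rw [hGE0]
      nlinarith
    have hL0 : 0 ≤ Lfun E Q₀ t := le_csSup ⟨Q'.l, hub⟩ h0mem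
    have hLup : Lfun E Q₀ t ≤ Q'.l := Real.sSup_le hub Q'.l_pos.le
    rw [Real.dist_eq, sub_zero, abs_of_nonneg hL0]
    linarith
  · -- Sfun → 0 as t → 0⁺
    rw [Metric.tendsto_nhds]
    intro ε hε
    obtain ⟨Q', hQ', hQ'l⟩ := exists_small hE hQ₀ hE0 hε
    have ht₁ : 0 < Q'.vol / Q₀.vol := div_pos Q'.vol_pos hSpos
    filter_upwards [Ioo_mem_nhdsGT_of_mem (⟨le_rfl, ht₁⟩ :
      (0:ℝ) ∈ Set.Ico 0 (Q'.vol / Q₀.vol))] with t ht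
    have hmem : Q'.l ∈ Sset t Q₀ E := by
      refine ⟨Q'.l_pos.le, le_trans ?_ (hLE_low Q' hQ')⟩
      exact ((lt_div_iff₀ hSpos).mp ht.2).le
    have hS0 : 0 ≤ Sfun E Q₀ t := le_csInf ⟨Q'.l, hmem⟩ (fun L hL => hL.1)
    have hSup : Sfun E Q₀ t ≤ Q'.l := csInf_le ⟨0, fun L hL => hL.1⟩ hmem
    rw [Real.dist_eq, sub_zero, abs_of_nonneg hS0]
    linarith
  · -- Lfun → M.l as t → 0⁺
    have ht₀ : 0 < M.vol / Q₀.vol := div_pos hMvol hSpos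
    have hev : ∀ᶠ t in nhdsWithin 0 (Set.Ioi 0), Lfun E Q₀ t = M.l := by
      filter_upwards [Ioo_mem_nhdsGT_of_mem (⟨le_rfl, ht₀⟩ :
        (0:ℝ) ∈ Set.Ico 0 (M.vol / Q₀.vol))] with t ht
      have hub : ∀ L ∈ Lset t Q₀ E, L ≤ M.l := by
        intro L hL
        by_contra hcon
        push_neg at hcon
        have h2 := hL.2
        rw [hGE_gt L hcon] at h2
        nlinarith [ht.1]
      have hmem : M.l ∈ Lset t Q₀ E := by
        refine ⟨M.l_pos.le, le_trans ?_ hGE_M⟩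
        exact ((lt_div_iff₀ hSpos).mp ht.2).le
      exact le_antisymm (Real.sSup_le hub M.l_pos.le) (le_csSup ⟨M.l, hub⟩ hmem)
    exact Filter.Tendsto.congr' (Filter.EventuallyEq.symm hev) tendsto_const_nhds
  · -- Sfun → M.l as t → 1⁻
    have hc1 : max ((Q₀.vol - M.vol) / Q₀.vol) 0 < 1 := by
      apply max_lt _ one_pos
      rw [div_lt_one hSpos]
      linarith
    have hev : ∀ᶠ t in nhdsWithin 1 (Set.Iio 1), Sfun E Q₀ t = M.l := by
      filter_upwards [Ioo_mem_nhdsLT_of_mem (⟨hc1, le_rfl⟩ :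
        (1:ℝ) ∈ Set.Ioc (max ((Q₀.vol - M.vol) / Q₀.vol) 0) 1)] with t ht
      have ht1 : t < 1 := ht.2
      have htc : (Q₀.vol - M.vol) / Q₀.vol < t :=
        lt_of_le_of_lt (le_max_left _ _) ht.1
      have hmem : M.l ∈ Sset t Q₀ E := by
        refine ⟨M.l_pos.le, ?_⟩
        rw [hLEMl]
        nlinarith
      have hlb : ∀ L ∈ Sset t Q₀ E, M.l ≤ L := by
        intro L hL
        by_contra hcon
        push_neg at hcon
        have h1 := hLE_excl L hcon
        have h2 := hL.2
        have h3 : Q₀.vol - M.vol < t * Q₀.vol := by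
          rw [div_lt_iff₀ hSpos] at htc
          linarith
        linarith
      exact le_antisymm (csInf_le ⟨0, fun L hL => hL.1⟩ hmem)
        (le_csInf ⟨M.l, hmem⟩ hlb)
    exact Filter.Tendsto.congr' (Filter.EventuallyEq.symm hev) tendsto_const_nhds
end

section
/- Let E ⊂ ℝⁿ be closed and non-empty, and suppose there exist 0 < s < 1 and C₀ > 0 such that for every cube Q₀ intersecting E, both 𝓛(s,Q₀,E) and 𝓢(s,Q₀,E) are non-empty and sup 𝓛(s,Q₀,E) ≤ C₀ · inf 𝓢(s,Q₀,E). Then |E| = 0. -/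
open MeasureTheory Set
open scoped Classical

-- aux
lemma cube_ext {n : ℕ} {Q Q' : Cube n} (ha : Q.a = Q'.a) (hl : Q.l = Q'.l) : Q = Q' := by
  cases Q; cases Q'; simp_all

lemma carrier_eq_pi {n : ℕ} (Q : Cube n) :
    Q.carrier = Set.pi univ (fun i => Ico (Q.a i) (Q.a i + Q.l)) := by
  ext x; simp [Cube.carrier, Set.mem_pi]

lemma measurable_carrier {n : ℕ} (Q : Cube n) : MeasurableSet Q.carrier := by
  rw [carrier_eq_pi]
  exact MeasurableSet.univ_pi (fun i => measurableSet_Ico)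

lemma volume_carrier {n : ℕ} (Q : Cube n) : volume Q.carrier = ENNReal.ofReal Q.vol := by
  rw [carrier_eq_pi, volume_pi_pi]
  simp only [Real.volume_Ico, add_sub_cancel_left]
  rw [Finset.prod_const, Cube.vol, ENNReal.ofReal_pow Q.l_pos.le]
  simp

lemma carrier_subset_of {n : ℕ} {Q P : Cube n} (h1 : ∀ i, P.a i ≤ Q.a i)
    (h2 : ∀ i, Q.a i + Q.l ≤ P.a i + P.l) : Q.carrier ⊆ P.carrier := by
  intro y hy i
  exact ⟨(h1 i).trans (hy i).1, lt_of_lt_of_le (hy i).2 (h2 i)⟩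

lemma vol_nonneg {n : ℕ} (Q : Cube n) : 0 ≤ Q.vol := pow_nonneg Q.l_pos.le n

lemma vol_pos {n : ℕ} (Q : Cube n) : 0 < Q.vol := pow_pos Q.l_pos n

lemma dyadic_nested {n : ℕ} {Q₀ Q Q' : Cube n} {j m : ℕ}
    (hQD : IsDyadic Q₀ Q j) (hQ'D : IsDyadic Q₀ Q' m) (hjm : j ≤ m)
    {x : Fin n → ℝ} (hxQ : x ∈ Q.carrier) (hxQ' : x ∈ Q'.carrier) :
    Q'.carrier ⊆ Q.carrier := by
  obtain ⟨hl, k, hk, ha⟩ := hQD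
  obtain ⟨hl', k', hk', ha'⟩ := hQ'D
  have hh := Q₀.l_pos
  set p : ℕ := 2 ^ (m - j) with hp
  set c : ℝ := Q₀.l / 2 ^ m with hc
  have hcpos : 0 < c := by positivity
  have hpc : Q₀.l / 2 ^ j = (p : ℝ) * c := by
    rw [hc, hp]
    have h2m : (2:ℝ) ^ m = 2 ^ j * 2 ^ (m - j) := by
      rw [← pow_add]; congr 1; omega
    rw [h2m]
    push_cast
    field_simp
  have e1 : ∀ i, (k i : ℝ) * Q₀.l / 2 ^ j = ((k i * p : ℕ) : ℝ) * c := by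
    intro i; rw [mul_div_assoc, hpc]; push_cast; ring
  have e2 : ∀ i, (k' i : ℝ) * Q₀.l / 2 ^ m = (k' i : ℝ) * c := by
    intro i; rw [mul_div_assoc, hc]
  have key : ∀ i, k i * p ≤ k' i ∧ k' i + 1 ≤ (k i + 1) * p := by
    intro i
    have h1 := (hxQ i).1
    have h2 := (hxQ i).2
    have h3 := (hxQ' i).1
    have h4 := (hxQ' i).2
    rw [ha i, e1 i] at h1 h2
    rw [hl, hpc] at h2
    rw [ha' i, e2 i] at h3 h4
    rw [hl'] at h4
    push_cast at h1 h2 h3 h4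
    have lt1 : ((k i : ℝ) * p) * c < ((k' i : ℝ) + 1) * c := by nlinarith
    have lt2 : (k' i : ℝ) * c < (((k i : ℝ) + 1) * p) * c := by nlinarith
    have n1 : ((k i : ℝ) * p) < (k' i : ℝ) + 1 := (mul_lt_mul_iff_of_pos_right hcpos).1 lt1
    have n2 : (k' i : ℝ) < ((k i : ℝ) + 1) * p := (mul_lt_mul_iff_of_pos_right hcpos).1 lt2
    have m1 : k i * p < k' i + 1 := by exact_mod_cast n1
    have m2 : k' i < (k i + 1) * p := by exact_mod_cast n2
    omega
  refine carrier_subset_of (fun i => ?_) (fun i => ?_)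
  · rw [ha i, e1 i, ha' i, e2 i]
    have : ((k i * p : ℕ) : ℝ) ≤ (k' i : ℝ) := by exact_mod_cast (key i).1
    nlinarith
  · rw [ha i, e1 i, ha' i, e2 i, hl, hl', hpc, hc]
    have : ((k' i : ℝ) + 1) ≤ (((k i + 1) * p : ℕ) : ℝ) := by exact_mod_cast (key i).2
    push_cast at this ⊢
    nlinarith







lemma a_mem_carrier {n : ℕ} (Q : Cube n) : Q.a ∈ Q.carrier :=
  fun i => ⟨le_refl _, by have := Q.l_pos; linarith⟩

lemma dyadic_sub {n : ℕ} {Q₀ Q : Cube n} {j : ℕ} (hQD : IsDyadic Q₀ Q j) :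
    Q.carrier ⊆ Q₀.carrier := by
  obtain ⟨hl, k, hk, ha⟩ := hQD
  have hh := Q₀.l_pos
  have h2 : (0:ℝ) < 2 ^ j := by positivity
  refine carrier_subset_of (fun i => ?_) (fun i => ?_)
  · rw [ha i]
    have : (0:ℝ) ≤ (k i : ℝ) * Q₀.l / 2 ^ j := by positivity
    linarith
  · rw [ha i, hl]
    have hki : ((k i : ℝ) + 1) ≤ (2:ℝ) ^ j := by
      have : (k i : ℝ) + 1 ≤ ((2^j : ℕ) : ℝ) := by exact_mod_cast hk i
      simpa using this
    have h5 : ((k i : ℝ) + 1) * (Q₀.l / 2 ^ j) ≤ (2:ℝ)^j * (Q₀.l / 2^j) := by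
      apply mul_le_mul_of_nonneg_right hki; positivity
    have e : (2:ℝ)^j * (Q₀.l / 2^j) = Q₀.l := by field_simp
    have h6 : ((k i : ℝ) + 1) * (Q₀.l / 2 ^ j) = (k i : ℝ) * Q₀.l / 2^j + Q₀.l/2^j := by ring
    linarith

lemma DE_not_both {n : ℕ} {E : Set (Fin n → ℝ)} {Q₀ Q Q' : Cube n} {j m : ℕ}
    (hQ : Q ∈ DE E Q₀) (hQ' : Q' ∈ DE E Q₀)
    (hQD : IsDyadic Q₀ Q j) (hQ'D : IsDyadic Q₀ Q' m) (hjm : j ≤ m)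
    {x : Fin n → ℝ} (hxQ : x ∈ Q.carrier) (hxQ' : x ∈ Q'.carrier) : Q = Q' := by
  rcases eq_or_lt_of_le hjm with rfl | hlt
  · -- same generation: carriers coincide, cubes coincide
    have h1 : Q'.carrier ⊆ Q.carrier := dyadic_nested hQD hQ'D le_rfl hxQ hxQ'
    have h2 : Q.carrier ⊆ Q'.carrier := dyadic_nested hQ'D hQD le_rfl hxQ' hxQ
    have hl : Q.l = Q'.l := by rw [hQD.1, hQ'D.1]
    have haQ := h2 (a_mem_carrier Q)
    have haQ' := h1 (a_mem_carrier Q')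
    refine cube_ext (funext fun i => ?_) hl
    have := (haQ i).1
    have := (haQ' i).1
    linarith
  · -- j < m : build the parent of Q' and derive a contradiction
    exfalso
    obtain ⟨hl', k', hk', ha'⟩ := hQ'D
    have hh := Q₀.l_pos
    set c : ℝ := Q₀.l / 2 ^ m with hc
    have hcpos : 0 < c := by positivity
    have h2m : (2:ℝ) ^ m = 2 ^ (m-1) * 2 := by
      rw [← pow_succ]; congr 1; omega
    have hpc2 : Q₀.l / 2 ^ (m-1) = 2 * c := by
      rw [hc, h2m]; field_simp
    set P : Cube n := ⟨fun i => Q₀.a i + ((k' i / 2 : ℕ) : ℝ) * Q₀.l / 2 ^ (m-1),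
      Q₀.l / 2 ^ (m-1), by positivity⟩ with hPdef
    have hPdy : IsDyadic Q₀ P (m-1) := by
      refine ⟨rfl, fun i => k' i / 2, fun i => ?_, fun i => rfl⟩
      have h2m' : (2:ℕ) ^ m = 2 ^ (m-1) * 2 := by rw [← pow_succ]; congr 1; omega
      have := hk' i
      show k' i / 2 < 2 ^ (m-1)
      omega
    have hQ'dy : IsDyadic Q₀ Q' m := ⟨hl', k', hk', ha'⟩
    have hsubP : Q'.carrier ⊆ P.carrier := by
      have haP : Q'.a ∈ P.carrier := by
        intro i
        show Q₀.a i + ((k' i / 2 : ℕ) : ℝ) * Q₀.l / 2 ^ (m-1) ≤ Q'.a i ∧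
          Q'.a i < Q₀.a i + ((k' i / 2 : ℕ) : ℝ) * Q₀.l / 2 ^ (m-1) + Q₀.l / 2 ^ (m-1)
        have e3 : ((k' i / 2 : ℕ) : ℝ) * Q₀.l / 2 ^ (m-1) = ((2 * (k' i / 2) : ℕ) : ℝ) * c := by
          rw [mul_div_assoc, hpc2]; push_cast; ring
        have e4 : (k' i : ℝ) * Q₀.l / 2 ^ m = (k' i : ℝ) * c := by rw [mul_div_assoc, hc]
        rw [ha' i, e3, e4, hpc2]
        have n1 : ((2 * (k' i / 2) : ℕ) : ℝ) ≤ (k' i : ℝ) := by exact_mod_cast Nat.mul_div_le _ _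
        have n2 : (k' i : ℝ) < ((2 * (k' i / 2) : ℕ) : ℝ) + 2 := by
          have : k' i < 2 * (k' i / 2) + 2 := by omega
          exact_mod_cast this
        constructor <;> nlinarith
      exact dyadic_nested hPdy hQ'dy (by omega) haP (a_mem_carrier Q')
    have hm1 : m - 1 + 1 = m := by omega
    have hParent : IsParent Q₀ P Q' := ⟨m - 1, by rw [hm1]; exact hQ'dy, hPdy, hsubP⟩
    have hPE : (P.carrier ∩ E).Nonempty := hQ'.2.2 P hParent
    have hPQ : P.carrier ⊆ Q.carrier :=
      dyadic_nested hQD hPdy (by omega) hxQ (hsubP hxQ')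
    obtain ⟨y, hyP, hyE⟩ := hPE
    have : y ∈ Q.carrier ∩ E := ⟨hPQ hyP, hyE⟩
    rw [hQ.2.1] at this
    exact this

lemma DE_disjoint {n : ℕ} {E : Set (Fin n → ℝ)} {Q₀ : Cube n} {Q Q' : Cube n}
    (hQ : Q ∈ DE E Q₀) (hQ' : Q' ∈ DE E Q₀) (hne : Q ≠ Q') :
    Disjoint Q.carrier Q'.carrier := by
  rw [Set.disjoint_left]
  intro x hxQ hxQ'
  obtain ⟨j, hQD⟩ := hQ.1
  obtain ⟨m, hQ'D⟩ := hQ'.1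
  rcases le_total j m with hjm | hmj
  · exact hne (DE_not_both hQ hQ' hQD hQ'D hjm hxQ hxQ')
  · exact hne (DE_not_both hQ' hQ hQ'D hQD hmj hxQ' hxQ).symm





lemma sumGE_le {n : ℕ} (E : Set (Fin n → ℝ)) (Q₀ : Cube n) (L : ℝ) :
    sumGE E Q₀ L ≤ (volume (Q₀.carrier \ E)).toReal := by
  set ι := {Q : Cube n // Q ∈ DE E Q₀ ∧ L ≤ Q.l}
  have htoReal_nonneg : (0:ℝ) ≤ (volume (Q₀.carrier \ E)).toReal := ENNReal.toReal_nonneg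
  by_cases hsum : Summable (fun i : ι => (i : Cube n).vol)
  · have hbound : ∑' i : ι, volume ((i : Cube n).carrier) ≤ volume (Q₀.carrier \ E) := by
      refine le_trans (tsum_meas_le_meas_iUnion_of_disjoint volume
        (fun i : ι => measurable_carrier _)
        (fun i i' hne => DE_disjoint i.2.1 i'.2.1 (fun h => hne (Subtype.ext h)))) ?_
      apply measure_mono
      rintro x hx'
      obtain ⟨i, hx⟩ := mem_iUnion.1 hx'
      obtain ⟨ji, hji⟩ := i.2.1.1
      refine ⟨dyadic_sub hji hx, fun hxE => ?_⟩
      have : x ∈ (i : Cube n).carrier ∩ E := ⟨hx, hxE⟩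
      rw [i.2.1.2.1] at this
      exact this
    have heq : ENNReal.ofReal (sumGE E Q₀ L) = ∑' i : ι, volume ((i : Cube n).carrier) := by
      rw [sumGE, ENNReal.ofReal_tsum_of_nonneg (fun i => vol_nonneg _) hsum]
      exact tsum_congr (fun i => (volume_carrier _).symm)
    have hfin : volume (Q₀.carrier \ E) ≠ ⊤ := by
      refine ne_top_of_le_ne_top ?_ (measure_mono (diff_subset))
      rw [volume_carrier]; exact ENNReal.ofReal_ne_top
    have := heq ▸ hbound
    rcases le_or_gt (sumGE E Q₀ L) 0 with h0 | h0
    · linarith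
    · rw [← ENNReal.ofReal_le_iff_le_toReal hfin] at *
      exact this
  · rw [sumGE, tsum_eq_zero_of_not_summable hsum]
    exact htoReal_nonneg

lemma key_measure {n : ℕ} {E : Set (Fin n → ℝ)} (hE : IsClosed E) {s : ℝ}
    (hs : s ∈ Set.Ioo (0:ℝ) 1)
    {Q₀ : Cube n} (hLne : (Lset s Q₀ E).Nonempty) :
    volume (E ∩ Q₀.carrier) ≤ ENNReal.ofReal ((1 - s) * Q₀.vol) := by
  obtain ⟨L, hL0, hLs⟩ := hLne
  have h1 : s * Q₀.vol ≤ (volume (Q₀.carrier \ E)).toReal :=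
    le_trans hLs (sumGE_le E Q₀ L)
  have hfinQ : volume Q₀.carrier ≠ ⊤ := by
    rw [volume_carrier]; exact ENNReal.ofReal_ne_top
  have hfin : volume (Q₀.carrier \ E) ≠ ⊤ :=
    ne_top_of_le_ne_top hfinQ (measure_mono diff_subset)
  have h2 : ENNReal.ofReal (s * Q₀.vol) ≤ volume (Q₀.carrier \ E) :=
    ENNReal.ofReal_le_of_le_toReal h1
  have hsplit : volume (Q₀.carrier ∩ E) + volume (Q₀.carrier \ E) = volume Q₀.carrier :=
    measure_inter_add_diff _ hE.measurableSet
  have h3 : volume (Q₀.carrier ∩ E) + ENNReal.ofReal (s * Q₀.vol) ≤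
      ENNReal.ofReal ((1 - s) * Q₀.vol) + ENNReal.ofReal (s * Q₀.vol) := by
    calc volume (Q₀.carrier ∩ E) + ENNReal.ofReal (s * Q₀.vol)
        ≤ volume (Q₀.carrier ∩ E) + volume (Q₀.carrier \ E) := by gcongr
      _ = volume Q₀.carrier := hsplit
      _ = ENNReal.ofReal ((1 - s) * Q₀.vol + s * Q₀.vol) := by
          rw [volume_carrier]; congr 1; ring
      _ = ENNReal.ofReal ((1 - s) * Q₀.vol) + ENNReal.ofReal (s * Q₀.vol) := by
          rw [ENNReal.ofReal_add]
          · nlinarith [vol_nonneg Q₀, hs.1, hs.2]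
          · exact mul_nonneg hs.1.le (vol_nonneg Q₀)
  rw [inter_comm]
  exact (ENNReal.add_le_add_iff_right ENNReal.ofReal_ne_top).1 h3


/-- If for some `0 < s < 1` and `C₀ > 0`, for every cube `Q₀` meeting `E` both
`𝓛(s,Q₀,E)` and `𝓢(s,Q₀,E)` are non-empty and `sup 𝓛(s,Q₀,E) ≤ C₀ inf 𝓢(s,Q₀,E)`,
then `|E| = 0`. -/
theorem stmt13 {n : ℕ} (E : Set (Fin n → ℝ)) (hE : IsClosed E) (hne : E.Nonempty)
    (s C₀ : ℝ) (hs : s ∈ Set.Ioo (0 : ℝ) 1) (hC₀ : 0 < C₀)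
    (h : ∀ Q₀ : Cube n, (Q₀.carrier ∩ E).Nonempty →
      (Lset s Q₀ E).Nonempty ∧ (Sset s Q₀ E).Nonempty ∧
        sSup (Lset s Q₀ E) ≤ C₀ * sInf (Sset s Q₀ E)) :
    volume E = 0 := by
  by_contra hvol
  have hEm := hE.measurableSet
  have hres : volume.restrict E ≠ 0 := by
    rw [Ne, Measure.restrict_eq_zero]; exact hvol
  have : (ae (volume.restrict E)).NeBot := ae_neBot.2 hres
  obtain ⟨x, hx, hxE⟩ := ((Besicovitch.ae_tendsto_measure_inter_div volume E).and
    (ae_restrict_mem hEm)).exists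
  have hbound : ∀ r ∈ Set.Ioi (0:ℝ),
      volume (E ∩ Metric.closedBall x r) / volume (Metric.closedBall x r) ≤
        ENNReal.ofReal (1 - s) := by
    intro r hr
    rw [Set.mem_Ioi] at hr
    set Q : Cube n := ⟨fun i => x i - r, 2 * r, by linarith⟩ with hQdef
    have hxQ : x ∈ Q.carrier := fun i => ⟨by simp [hQdef]; linarith, by simp [hQdef]; linarith⟩
    have hmeets : (Q.carrier ∩ E).Nonempty := ⟨x, hxQ, hxE⟩
    have hkey : volume (E ∩ Q.carrier) ≤ ENNReal.ofReal ((1 - s) * Q.vol) :=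
      key_measure hE hs (h Q hmeets).1
    have hsubset : Metric.closedBall x r ⊆
        (E ∩ Q.carrier ∪ ⋃ i, {y : Fin n → ℝ | y i = x i + r}) ∪ Eᶜ := by
      intro y hy
      rcases Classical.em (y ∈ E) with hyE | hyE
      · left
        have hdist : ∀ i, dist (y i) (x i) ≤ r := by
          rw [Metric.mem_closedBall] at hy
          exact fun i => (dist_le_pi_dist y x i).trans hy
        by_cases hall : ∀ i, y i < x i + r
        · left
          refine ⟨hyE, fun i => ?_⟩
          have := abs_le.1 ((Real.dist_eq _ _) ▸ hdist i)
          constructor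
          · show x i - r ≤ y i; linarith [this.1]
          · show y i < x i - r + (2 * r); linarith [hall i]
        · right
          push_neg at hall
          obtain ⟨i, hi⟩ := hall
          have := abs_le.1 ((Real.dist_eq _ _) ▸ hdist i)
          exact mem_iUnion.2 ⟨i, le_antisymm (by linarith [this.2]) hi⟩
      · right; exact hyE
    have hnull : volume (⋃ i, {y : Fin n → ℝ | y i = x i + r}) = 0 := by
      refine measure_iUnion_null fun i => ?_
      rw [MeasureTheory.volume_pi]
      exact Measure.pi_hyperplane _ i _
    have hEB : volume (E ∩ Metric.closedBall x r) ≤ ENNReal.ofReal ((1 - s) * Q.vol) := by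
      have hsub2 : E ∩ Metric.closedBall x r ⊆
          E ∩ Q.carrier ∪ ⋃ i, {y : Fin n → ℝ | y i = x i + r} := by
        rintro y ⟨hyE, hyB⟩
        rcases hsubset hyB with hmem | hmem
        · exact hmem
        · exact absurd hyE hmem
      calc volume (E ∩ Metric.closedBall x r)
          ≤ volume (E ∩ Q.carrier ∪ ⋃ i, {y : Fin n → ℝ | y i = x i + r}) :=
            measure_mono hsub2
        _ ≤ volume (E ∩ Q.carrier) + volume (⋃ i, {y : Fin n → ℝ | y i = x i + r}) :=
            measure_union_le _ _
        _ = volume (E ∩ Q.carrier) := by rw [hnull, add_zero]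
        _ ≤ _ := hkey
    have hball : volume (Metric.closedBall x r) = ENNReal.ofReal ((2 * r) ^ n) := by
      rw [Real.volume_pi_closedBall x (le_of_lt hr)]
      simp
    refine ENNReal.div_le_of_le_mul ?_
    rw [hball, ← ENNReal.ofReal_mul (by linarith [hs.2] : (0:ℝ) ≤ 1 - s)]
    have hvolQ : Q.vol = (2 * r) ^ n := rfl
    rw [hvolQ] at hEB
    exact hEB
  have hev : ∀ᶠ r in nhdsWithin (0:ℝ) (Set.Ioi 0),
      volume (E ∩ Metric.closedBall x r) / volume (Metric.closedBall x r) ≤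
        ENNReal.ofReal (1 - s) :=
    eventually_nhdsWithin_of_forall hbound
  have hle : (1:ENNReal) ≤ ENNReal.ofReal (1 - s) := le_of_tendsto hx hev
  have hlt : ENNReal.ofReal (1 - s) < 1 := ENNReal.ofReal_lt_one.2 (by linarith [hs.1])
  exact absurd hle (not_le.2 hlt)
end
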